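/- Let 𝓔 := {(e_1, e_2) ∈ ℝ² : e_1 ≤ e_2} and Ω^{𝓔,1} := 𝓔 × C_0^1. Define Φ: Ω^{𝓔,1} → C^𝓔 by Φ_t(e_1, e_2; x) := (e_1 + x(t), e_2 ∨ max_{0 ≤ s ≤ t}(e_1 + x(s))). Then Φ is an updating function; that is: (1) Φ_0(e_1, e_2; x) = (e_1, e_2) for all (e_1, e_2) ∈ 𝓔 and x ∈ C_0^1; (2) the stopped path ∇(Φ(e_1, e_2; x), t) equals ∇(Φ(e_1, e_2; ∇(x,t)), t) for all t ≥ 0; and (3) Θ(Φ(e_1, e_2; x), t) = Φ(Φ_t(e_1, e_2; x), Δ(x,t)) for all t ≥ 0, (e_1, e_2) ∈ 𝓔 and x ∈ C_0^1. -/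

import Mathlib

open MeasureTheory Filter Set
open scoped ENNReal NNReal Topology

noncomputable section

namespace Mimic

/-- Lebesgue measure on `[0,∞)`, modeled as `ℝ≥0`. -/
def leb : Measure ℝ≥0 := (volume : Measure ℝ).comap (↑·)

variable (E : Type*) [MeasurableSpace E] (V : Type*) [NormedAddCommGroup V]

/-- The space `C_0` of continuous paths `[0,∞) → V` vanishing at `0`, with the
topology of uniform convergence on compact sets (compact-open topology). -/
def C0 : Type _ := {x : C(ℝ≥0, V) // x 0 = 0}

instance : TopologicalSpace (C0 V) := inferInstanceAs (TopologicalSpace {x : C(ℝ≥0, V) // x 0 = 0})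
instance : MeasurableSpace (C0 V) := borel _
instance : BorelSpace (C0 V) := ⟨rfl⟩

variable {E V}

/-- The value of a path in `C0` at time `t`. -/
def C0.eval (x : C0 V) (t : ℝ≥0) : V := x.1 t

/-- The stopping operator `∇(x,t) := x(· ∧ t)` on continuous maps. -/
def stopCM (x : C(ℝ≥0, V)) (t : ℝ≥0) : C(ℝ≥0, V) :=
  x.comp ⟨fun s => min s t, continuous_id.min continuous_const⟩

/-- The stopping operator on `C0`. -/
def stop0 (x : C0 V) (t : ℝ≥0) : C0 V :=
  ⟨stopCM x.1 t, by
    simp only [stopCM, ContinuousMap.comp_apply, ContinuousMap.coe_mk]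
    rw [min_eq_left (zero_le (a := t))]
    exact x.2⟩

/-- The difference operator `Δ(x,t) := x(t+·) − x(t)`, valued in `C0`. -/
def delta (x : C(ℝ≥0, V)) (t : ℝ≥0) : C0 V :=
  ⟨⟨fun s => x (t + s) - x t,
    ((x.continuous.comp (continuous_const.add continuous_id)).sub continuous_const)⟩,
    by simp⟩

/-- The shift operator `Θ(x,t) := x(t+·)` for `t ≥ 0`. -/
def shiftCM {α : Type*} [TopologicalSpace α] (x : C(ℝ≥0, α)) (t : ℝ≥0) : C(ℝ≥0, α) :=
  x.comp ⟨fun s => t + s, continuous_const.add continuous_id⟩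

lemma continuous_stop0 (t : ℝ≥0) : Continuous (fun x : C0 V => stop0 x t) := by
  apply Continuous.subtype_mk
  exact (ContinuousMap.continuous_precomp _).comp continuous_subtype_val

variable (E V)

/-- The canonical space `Ω^{𝓔,d} = 𝓔 × C_0`, with σ-field `𝔈 ⊗ σ(X)`. -/
abbrev OmegaEd : Type _ := E × C0 V

/-- The map `ω = (e,x) ↦ (e, x(·∧t))`. -/
def stopPair (t : ℝ≥0) : OmegaEd E V → OmegaEd E V := fun ω => (ω.1, stop0 ω.2 t)

lemma measurable_stopPair (t : ℝ≥0) : Measurable (stopPair E V t) :=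
  measurable_fst.prodMk (((continuous_stop0 (V := V) t).measurable).comp measurable_snd)

/-- The canonical filtration `F_t^{𝓔,d} := 𝔈 ⊗ σ(X^t)` on `Ω^{𝓔,d}`. -/
def FF : Filtration ℝ≥0 (inferInstance : MeasurableSpace (OmegaEd E V)) where
  seq t := MeasurableSpace.comap (stopPair E V t) inferInstance
  mono' := by
    intro s t hst
    have hcomp : stopPair E V s = (stopPair E V s) ∘ (stopPair E V t) := by
      funext ω
      simp only [Function.comp_apply, stopPair, stop0, stopCM]
      refine Prod.ext rfl (Subtype.ext (ContinuousMap.ext fun u => ?_))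
      simp only [ContinuousMap.comp_apply, ContinuousMap.coe_mk]
      rw [min_eq_left ((min_le_right u s).trans hst)]
    calc MeasurableSpace.comap (stopPair E V s) inferInstance
        = MeasurableSpace.comap (stopPair E V t)
            (MeasurableSpace.comap (stopPair E V s) inferInstance) := by
          nth_rewrite 1 [hcomp]
          exact MeasurableSpace.comap_comp.symm
      _ ≤ MeasurableSpace.comap (stopPair E V t) inferInstance :=
          MeasurableSpace.comap_mono
            (measurable_iff_comap_le.mp (measurable_stopPair E V s))
  le' t := measurable_iff_comap_le.mp (measurable_stopPair E V t)

variable {E V}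

/-- The σ-field `σ(Δ(X,T))` generated by the increments of the coordinate
process after the random time `T`. -/
def sigmaDelta (T : OmegaEd E V → ℝ≥0) : MeasurableSpace (OmegaEd E V) :=
  MeasurableSpace.comap (fun ω => delta ω.2.1 (T ω)) inferInstance

/-- The σ-field `σ(Δ(X^{T'},T))` generated by the increments of the coordinate
process stopped at `T'` after the random time `T`. -/
def sigmaDeltaStopped (T' T : OmegaEd E V → ℝ≥0) : MeasurableSpace (OmegaEd E V) :=
  MeasurableSpace.comap (fun ω => delta (stop0 ω.2 (T' ω)).1 (T ω)) inferInstance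

end Mimic

namespace Mimic
/-- Measures on the canonical space `Ω^{𝓔,d}` with respect to the canonical
product σ-field `F^{𝓔,d} = 𝔈 ⊗ σ(X)` (this abbreviation pins down the
σ-field, so that it is unaffected by local σ-field variables). -/
abbrev OmegaMeasure (E : Type*) [MeasurableSpace E] (V : Type*) [NormedAddCommGroup V] :
    Type _ :=
  @Measure (OmegaEd E V) Prod.instMeasurableSpace
end Mimic

namespace Mimic


lemma nn_isCompact_Iic (t : ℝ≥0) : IsCompact (Iic t : Set ℝ≥0) := by
  rw [← Icc_bot]; exact isCompact_Icc

lemma continuous_runningSup {f : ℝ≥0 → ℝ} (hf : Continuous f) :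
    Continuous fun t => sSup (f '' Iic t) := by
  rw [continuous_iff_continuousAt]
  intro t0
  have hg : Continuous ↿(fun (t : ℝ≥0) (u : ℝ≥0) => f (min u t)) :=
    hf.comp (continuous_snd.min continuous_fst)
  have hcont : Continuous fun t => sSup ((fun u => f (min u t)) '' Iic (t0 + 1)) :=
    (nn_isCompact_Iic (t0 + 1)).continuous_sSup hg
  refine (hcont.continuousAt).congr ?_
  filter_upwards [Iic_mem_nhds (lt_add_one t0)] with t (ht : t ≤ t0 + 1)
  have : (fun u => f (min u t)) '' Iic (t0 + 1) = f '' Iic t := by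
    ext y
    constructor
    · rintro ⟨u, _, rfl⟩
      exact ⟨min u t, min_le_right u t, rfl⟩
    · rintro ⟨v, hv, rfl⟩
      exact ⟨v, le_trans hv ht, by simp [min_eq_left (mem_Iic.mp hv)]⟩
  rw [this]

lemma image_add_Iic' (t s : ℝ≥0) : (fun u => t + u) '' Iic s = Icc t (t + s) := by
  ext y
  constructor
  · rintro ⟨u, hu, rfl⟩
    exact ⟨le_self_add, add_le_add_right hu t⟩
  · rintro ⟨h1, h2⟩
    exact ⟨y - t, tsub_le_iff_left.mpr h2, add_tsub_cancel_of_le h1⟩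

/-- The maximum-to-date updating formula
`Φ_t(e₁,e₂; x) = (e₁ + x(t), e₂ ∨ max_{0≤s≤t}(e₁ + x(s)))`. -/
def maxUpdate (e : ℝ × ℝ) (x : C0 ℝ) (t : ℝ≥0) : ℝ × ℝ :=
  (e.1 + x.1 t, max e.2 (sSup ((fun s => e.1 + x.1 s) '' Set.Iic t)))

/-- **Example (Maximum-to-date).** On `𝓔 = {(e₁,e₂) ∈ ℝ² : e₁ ≤ e₂}`, the map
`Φ_t(e₁,e₂; x) = (e₁ + x(t), e₂ ∨ max_{0≤s≤t}(e₁ + x(s)))` is an updating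
function: it takes values in `𝓔`, has continuous paths, and satisfies
(1) `Φ_0(e,x) = e`, (2) `∇(Φ(e,x),t) = ∇(Φ(e,∇(x,t)),t)`, and
(3) `Θ(Φ(e,x),t) = Φ(Φ_t(e,x), Δ(x,t))` for all `t ≥ 0`. -/
theorem maxUpdate_is_updating_function :
    ∀ e : ℝ × ℝ, e.1 ≤ e.2 → ∀ x : C0 ℝ,
      -- `Φ` maps into `C^𝓔` for `𝓔 = {(e₁,e₂) : e₁ ≤ e₂}` …
      (∀ t : ℝ≥0, (maxUpdate e x t).1 ≤ (maxUpdate e x t).2) ∧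
      -- … and its paths are continuous
      Continuous (fun t => maxUpdate e x t) ∧
      -- (1) `Φ_0(e₁,e₂; x) = (e₁,e₂)`
      maxUpdate e x 0 = e ∧
      -- (2) `∇(Φ(e,x),t) = ∇(Φ(e,∇(x,t)),t)` for all `t ≥ 0`
      (∀ t s : ℝ≥0, maxUpdate e x (min s t) = maxUpdate e (stop0 x t) (min s t)) ∧
      -- (3) `Θ(Φ(e,x),t) = Φ(Φ_t(e,x), Δ(x,t))` for all `t ≥ 0`
      (∀ t s : ℝ≥0, maxUpdate e x (t + s) = maxUpdate (maxUpdate e x t) (delta x.1 t) s) := by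
  intro e he x
  have hfc : Continuous fun s => e.1 + x.1 s := continuous_const.add x.1.continuous
  have hbdd : ∀ t : ℝ≥0, BddAbove ((fun s => e.1 + x.1 s) '' Iic t) := fun t =>
    ((nn_isCompact_Iic t).image hfc).bddAbove
  have hne : ∀ t : ℝ≥0, ((fun s => e.1 + x.1 s) '' Iic t).Nonempty := fun t =>
    (nonempty_Iic).image _
  refine ⟨?_, ?_, ?_, ?_, ?_⟩
  · -- maps into 𝓔
    intro t
    exact le_max_of_le_right (le_csSup (hbdd t) ⟨t, mem_Iic.2 le_rfl, rfl⟩)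
  · -- continuity
    exact (continuous_const.add x.1.continuous).prodMk
      (continuous_const.max (continuous_runningSup hfc))
  · -- (1) value at 0
    have h0 : (Iic (0 : ℝ≥0)) = {0} := by ext u; simp [le_zero_iff]
    have : sSup ((fun s => e.1 + x.1 s) '' Iic (0 : ℝ≥0)) = e.1 := by
      rw [h0, image_singleton, csSup_singleton, x.2, add_zero]
    simp only [maxUpdate, this, x.2, add_zero, max_eq_left he]
  · -- (2) stopping consistency
    intro t s
    have h1 : min (min s t) t = min s t := by
      rw [min_assoc, min_self]
    have h2 : ((fun u => e.1 + (stop0 x t).1 u) '' Iic (min s t))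
        = ((fun u => e.1 + x.1 u) '' Iic (min s t)) := by
      apply image_congr
      intro u hu
      have : min u t = u := min_eq_left ((mem_Iic.mp hu).trans (min_le_right s t))
      simp [stop0, stopCM, this]
    simp only [maxUpdate]
    refine Prod.ext ?_ ?_
    · show e.1 + x.1 (min s t) = e.1 + (stop0 x t).1 (min s t)
      simp [stop0, stopCM, h1]
    · show max e.2 _ = max e.2 _
      rw [h2]
  · -- (3) flow property
    intro t s
    have hdelta : ∀ u : ℝ≥0, ((maxUpdate e x t).1 + (delta x.1 t).1 u : ℝ)
        = e.1 + x.1 (t + u) := by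
      intro u
      simp only [maxUpdate, delta, ContinuousMap.coe_mk]
      ring
    have himg : ((fun u => (maxUpdate e x t).1 + (delta x.1 t).1 u) '' Iic s)
        = ((fun v => e.1 + x.1 v) '' Icc t (t + s)) := by
      rw [← image_add_Iic' t s, ← image_comp]
      exact image_congr fun u _ => hdelta u
    have hbddI : BddAbove ((fun v => e.1 + x.1 v) '' Icc t (t + s)) :=
      (isCompact_Icc.image hfc).bddAbove
    have hneI : ((fun v => e.1 + x.1 v) '' Icc t (t + s)).Nonempty :=
      (nonempty_Icc.2 le_self_add).image _
    have hsplit : sSup ((fun v => e.1 + x.1 v) '' Iic (t + s))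
        = max (sSup ((fun v => e.1 + x.1 v) '' Iic t))
            (sSup ((fun v => e.1 + x.1 v) '' Icc t (t + s))) := by
      rw [← Iic_union_Icc_eq_Iic (le_self_add : t ≤ t + s), image_union,
        csSup_union (hbdd t) (hne t) hbddI hneI]
    refine Prod.ext ?_ ?_
    · show e.1 + x.1 (t + s) = (maxUpdate e x t).1 + (delta x.1 t).1 s
      rw [hdelta s]
    · show max e.2 _ = max (maxUpdate e x t).2 _
      rw [hsplit, himg, ← max_assoc]
      rfl

end Mimic
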